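/- If there exists a superpermutation on n symbols of length k (with n ≥ 1), then there exists a superpermutation on n+1 symbols of length k + (n+1)!. -/

import Mathlib

/-- A superpermutation on `n` symbols: a word over `Fin n` containing every
permutation of `Fin n` (viewed as the word `σ 0, σ 1, …, σ (n-1)`) as a
contiguous substring (infix). -/
def IsSuperperm (n : ℕ) (w : List (Fin n)) : Prop :=
  ∀ σ : Equiv.Perm (Fin n), List.ofFn ⇑σ <:+: w

namespace SuperpermAux

/-- Insert `Fin.last n` followed by a copy of the `n` letters preceding position `i + n`
after position `i + n`, for each `i` in `ps` (processed from largest to smallest). -/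
def g (n : ℕ) : List ℕ → List (Fin (n + 1)) → List (Fin (n + 1))
  | [], v => v
  | i :: rest, v => g n rest (v.take (i + n)) ++ (Fin.last n :: v.drop i)

lemma g_length {n : ℕ} : ∀ (ps : List ℕ) (v : List (Fin (n + 1))),
    (∀ i ∈ ps, i + n ≤ v.length) → ps.Pairwise (· > ·) →
    (g n ps v).length = v.length + (n + 1) * ps.length
  | [], v, _, _ => by simp [g]
  | i :: rest, v, hb, hs => by
    have hin : i + n ≤ v.length := hb i (by simp)
    have hlt : ∀ i' ∈ rest, i' < i := fun i' h => (List.pairwise_cons.mp hs).1 i' h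
    have ih := g_length rest (v.take (i + n))
      (fun i' h => by have := hlt i' h; simp; omega) (List.pairwise_cons.mp hs).2
    simp only [g, List.length_append, List.length_cons, List.length_drop, ih,
      List.length_take]
    have : min (i + n) v.length = i + n := by omega
    rw [this]; ring_nf; omega

lemma suffix_g {n : ℕ} : ∀ (ps : List ℕ) (v s : List (Fin (n + 1))),
    (∀ i ∈ ps, i + n ≤ v.length) → ps.Pairwise (· > ·) →
    s.length ≤ n → s <:+ v → s <:+ g n ps v
  | [], _, _, _, _, _, h => h
  | i :: rest, v, s, hb, hs, hsl, h => by
    have hin : i + n ≤ v.length := hb i (by simp)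
    have hsv : s <:+ v.drop i := by
      obtain ⟨t, ht⟩ := h
      have htl : i ≤ t.length := by
        have : t.length + s.length = v.length := by rw [← ht]; simp
        omega
      exact ⟨t.drop i, by rw [← ht, List.drop_append_of_le_length htl]⟩
    exact ((hsv.trans (List.suffix_cons _ _)).trans (List.suffix_append _ _))

lemma block_infix {n : ℕ} : ∀ (ps : List ℕ) (v : List (Fin (n + 1))),
    (∀ i' ∈ ps, i' + n ≤ v.length) → ps.Pairwise (· > ·) →
    ∀ i ∈ ps,
      ((v.drop i).take n ++ Fin.last n :: (v.drop i).take n) <:+: g n ps v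
  | i₀ :: rest, v, hb, hs, i, hi => by
    have hin : i₀ + n ≤ v.length := hb i₀ (by simp)
    have hlt : ∀ i' ∈ rest, i' < i₀ := fun i' h => (List.pairwise_cons.mp hs).1 i' h
    have hbt : ∀ i' ∈ rest, i' + n ≤ (v.take (i₀ + n)).length := fun i' h => by
      have := hlt i' h; simp; omega
    rcases List.mem_cons.mp hi with rfl | hi'
    · set s : List (Fin (n + 1)) := (v.drop i).take n with hs_def
      have h0 : (v.take (i + n)).drop i = s := by
        rw [List.drop_take]; congr 1; omega
      have h1 : s <:+ v.take (i + n) := h0 ▸ (v.take (i + n)).drop_suffix i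
      have h2 : s <:+ g n rest (v.take (i + n)) :=
        suffix_g rest (v.take (i + n)) s hbt (List.pairwise_cons.mp hs).2
          (by simp [hs_def]) h1
      obtain ⟨A', hA⟩ := h2
      refine ⟨A', (v.drop i).drop n, ?_⟩
      show A' ++ (s ++ Fin.last n :: s) ++ (v.drop i).drop n = _
      rw [g, ← hA]
      simp only [List.append_assoc, List.cons_append]
      congr 2
      rw [hs_def, List.take_append_drop]
    · have ih := block_infix rest (v.take (i₀ + n)) hbt (List.pairwise_cons.mp hs).2 i hi'
      have hilt : i < i₀ := hlt i hi'
      have heq : ((v.take (i₀ + n)).drop i).take n = (v.drop i).take n := by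
        rw [List.drop_take, List.take_take]
        congr 1; omega
      rw [heq] at ih
      exact ih.trans ⟨[], Fin.last n :: v.drop i₀, by simp [g]⟩

lemma exists_block {n : ℕ} (τ : Equiv.Perm (Fin (n + 1))) :
    ∃ q : Equiv.Perm (Fin n),
      List.ofFn ⇑τ <:+:
        ((List.ofFn ⇑q).map Fin.castSucc ++
          Fin.last n :: (List.ofFn ⇑q).map Fin.castSucc) := by
  set j : Fin (n + 1) := τ.symm (Fin.last n) with hj
  set ρ : Equiv.Perm (Fin (n + 1)) := (Equiv.addRight (j + 1)).trans τ with hρ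
  have hρ_apply : ∀ i, ρ i = τ (i + (j + 1)) := fun i => rfl
  have hlj : Fin.last n + (j + 1) = j := by
    rw [show Fin.last n + (j + 1) = (Fin.last n + 1) + j from by rw [add_comm j 1, ← add_assoc],
      Fin.last_add_one, zero_add]
  have hρ_last : ρ (Fin.last n) = Fin.last n := by
    rw [hρ_apply, hlj, hj, Equiv.apply_symm_apply]
  have hne : ∀ i : Fin n, ρ i.castSucc ≠ Fin.last n := by
    intro i hcon
    have := ρ.injective (hcon.trans hρ_last.symm)
    exact (Fin.castSucc_lt_last i).ne this
  have hne' : ∀ i : Fin n, ρ.symm i.castSucc ≠ Fin.last n := by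
    intro i hcon
    have : i.castSucc = Fin.last n := by
      have h2 := congrArg ρ hcon
      rwa [Equiv.apply_symm_apply, hρ_last] at h2
    exact (Fin.castSucc_lt_last i).ne this
  set q : Equiv.Perm (Fin n) :=
    { toFun := fun i => (ρ i.castSucc).castPred (hne i)
      invFun := fun i => (ρ.symm i.castSucc).castPred (hne' i)
      left_inv := fun i => by simp [Fin.castSucc_castPred]
      right_inv := fun i => by simp [Fin.castSucc_castPred] } with hq
  refine ⟨q, ?_⟩
  set W : List (Fin (n + 1)) := (List.ofFn ⇑q).map Fin.castSucc with hW
  have hWlen : W.length = n := by simp [hW]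
  have hWget : ∀ (m : ℕ) (hm : m < n), W[m]'(by omega) = τ (⟨m, by omega⟩ + (j + 1)) := by
    intro m hm
    simp only [hW, hq, List.getElem_map, List.getElem_ofFn, Equiv.coe_fn_mk,
      Fin.castSucc_castPred]
    rw [hρ_apply]
    rfl
  have hτj : τ j = Fin.last n := by rw [hj, Equiv.apply_symm_apply]
  set d : ℕ := n - (j : ℕ) with hd
  have hjn : (j : ℕ) ≤ n := by omega
  have hadd : ∀ (x : ℕ) (hx : x < n + 1),
      (((⟨x, hx⟩ : Fin (n + 1)) + (j + 1) : Fin (n + 1)) : ℕ)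
        = (x + ((j : ℕ) + 1)) % (n + 1) := by
    intro x hx
    rw [Fin.add_def, Fin.add_def]
    simp only [Fin.val_one']
    show (x + (↑j + 1 % (n + 1)) % (n + 1)) % (n + 1) = _
    rw [Nat.add_mod_mod, ← Nat.add_assoc, Nat.add_mod_mod, Nat.add_assoc]
  have key : List.ofFn ⇑τ = W.drop d ++ [Fin.last n] ++ W.take d := by
    apply List.ext_getElem
    · simp [hWlen]; omega
    · intro m h₁ h₂
      simp only [List.length_ofFn] at h₁
      rw [List.getElem_ofFn]
      simp only [List.getElem_append, List.length_append, List.length_drop,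
        List.length_take, List.length_singleton, hWlen, List.getElem_singleton]
      split_ifs with hc1 hc2
      · -- m < n - d (i.e. m < j) : take the drop part
        rw [List.getElem_drop, hWget (d + m) (by omega)]
        congr 1
        apply Fin.ext
        rw [hadd (d + m) (by omega)]
        rw [show d + m + ((j : ℕ) + 1) = (n + 1) + m from by omega,
          Nat.add_mod_left, Nat.mod_eq_of_lt (by omega)]
      · -- middle : m = j
        have hmj : (⟨m, by omega⟩ : Fin (n + 1)) = j := Fin.ext (by simp at hc1 hc2 ⊢; omega)
        rw [hmj, hτj]
      · -- right part
        have hjm : (j : ℕ) < m := by omega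
        rw [List.getElem_take, hWget (m - (n - d + 1)) (by omega)]
        congr 1
        apply Fin.ext
        rw [hadd (m - (n - d + 1)) (by omega)]
        rw [show m - (n - d + 1) + ((j : ℕ) + 1) = m from by omega,
          Nat.mod_eq_of_lt (by omega)]
  refine ⟨W.take d, W.drop d, ?_⟩
  rw [key]
  simp only [List.append_assoc, List.singleton_append, List.cons_append]
  rw [List.take_append_drop, ← List.append_assoc, List.take_append_drop,
    List.nil_append]

end SuperpermAux

theorem stmt_0 (n k : ℕ) (hn : 1 ≤ n)
    (h : ∃ w : List (Fin n), IsSuperperm n w ∧ w.length = k) :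
    ∃ w' : List (Fin (n + 1)), IsSuperperm (n + 1) w' ∧
      w'.length = k + Nat.factorial (n + 1) := by
  classical
  obtain ⟨w, hw, hlen⟩ := h
  have hocc : ∀ q : Equiv.Perm (Fin n),
      ∃ i, i + n ≤ w.length ∧ (w.drop i).take n = List.ofFn ⇑q := by
    intro q
    obtain ⟨s, t, hst⟩ := hw q
    refine ⟨s.length, ?_, ?_⟩
    · have : s.length + (n + t.length) = w.length := by
        rw [← hst]; simp
      omega
    · rw [← hst, List.append_assoc, List.drop_left, List.take_left' (by simp)]
  choose pos hpos1 hpos2 using hocc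
  have hinj : Function.Injective pos := by
    intro a b hab
    have : List.ofFn ⇑a = List.ofFn ⇑b := by
      rw [← hpos2 a, ← hpos2 b, hab]
    exact Equiv.coe_fn_injective (List.ofFn_injective this)
  set v : List (Fin (n + 1)) := w.map Fin.castSucc with hv
  have hvlen : v.length = k := by simp [hv, hlen]
  set ps : List ℕ := ((Finset.univ.image pos).sort (· ≤ ·)).reverse with hps
  have hsort : ps.Pairwise (· > ·) := by
    rw [hps, List.pairwise_reverse]
    exact List.sortedLT_iff_pairwise.mp (Finset.sortedLT_sort _)
  have hmem : ∀ i ∈ ps, ∃ q, pos q = i := by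
    intro i hi
    rw [hps, List.mem_reverse, Finset.mem_sort, Finset.mem_image] at hi
    obtain ⟨q, _, hq⟩ := hi
    exact ⟨q, hq⟩
  have hmem' : ∀ q : Equiv.Perm (Fin n), pos q ∈ ps := by
    intro q
    rw [hps, List.mem_reverse, Finset.mem_sort, Finset.mem_image]
    exact ⟨q, Finset.mem_univ q, rfl⟩
  have hbounds : ∀ i ∈ ps, i + n ≤ v.length := by
    intro i hi
    obtain ⟨q, rfl⟩ := hmem i hi
    have := hpos1 q
    simp [hv]; omega
  have hpslen : ps.length = Nat.factorial n := by
    rw [hps, List.length_reverse, Finset.length_sort,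
      Finset.card_image_of_injective _ hinj, Finset.card_univ,
      Fintype.card_perm, Fintype.card_fin]
  refine ⟨SuperpermAux.g n ps v, ?_, ?_⟩
  · intro τ
    obtain ⟨q, hq⟩ := SuperpermAux.exists_block τ
    have hblock := SuperpermAux.block_infix ps v hbounds hsort (pos q) (hmem' q)
    have hseq : (v.drop (pos q)).take n = (List.ofFn ⇑q).map Fin.castSucc := by
      rw [hv, ← List.map_drop, ← List.map_take, hpos2 q]
    rw [hseq] at hblock
    exact hq.trans hblock
  · rw [SuperpermAux.g_length ps v hbounds hsort, hvlen, hpslen,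
      Nat.factorial_succ]
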